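/- For every real ν ≥ 1/2, the function f(x) = x^{1/2} e^{-x} I_ν(x) is strictly increasing on (0,∞) and converges to 1/√(2π) as x → ∞; consequently I_ν(x) ≤ (1/√(2π)) x^{-1/2} e^{x} for all x > 0. -/

import Mathlib

section BesselAux

open Real MeasureTheory intervalIntegral Set Filter



/-- The modified Bessel function of the first kind, defined for `x > 0` by the power series
`I_ν(x) = Σ_{k=0}^∞ (1/(k! Γ(ν+k+1))) (x/2)^{2k+ν}`. -/
noncomputable def besselIseries (ν x : ℝ) : ℝ :=
  ∑' k : ℕ, (1 / ((Nat.factorial k : ℝ) * Real.Gamma (ν + k + 1))) *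
    (x / 2) ^ (2 * (k : ℝ) + ν)


lemma myGamma_nat_add_half (k : ℕ) :
    Real.Gamma (k + 1/2) = (Nat.factorial (2*k)) * Real.sqrt π / (4^k * Nat.factorial k) := by
  induction k with
  | zero => norm_num [← Real.Gamma_one_half_eq]
  | succ n ih =>
    have h : ((n:ℝ)+1) + 1/2 = ((n:ℝ) + 1/2) + 1 := by ring
    push_cast
    rw [h, Real.Gamma_add_one (by positivity), ih]
    have h2 : (Nat.factorial (2*(n+1)) : ℝ) = (2*n+2) * (2*n+1) * Nat.factorial (2*n) := by
      have : 2*(n+1) = (2*n+1) + 1 := by ring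
      rw [this, Nat.factorial_succ, Nat.factorial_succ]
      push_cast; ring
    have h3 : (Nat.factorial (n+1) : ℝ) = (n+1) * Nat.factorial n := by
      rw [Nat.factorial_succ]; push_cast; ring
    push_cast at h2 h3 ⊢
    rw [h2, h3]
    have hf : (Nat.factorial n : ℝ) ≠ 0 := by positivity
    field_simp
    ring

lemma myBeta (a b : ℝ) (ha : 0 < a) (hb : 0 < b) :
    ∫ u in (0:ℝ)..1, u^(a-1) * (1-u)^(b-1) =
      Real.Gamma a * Real.Gamma b / Real.Gamma (a+b) := by
  have hab : (0:ℝ) < a + b := by linarith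
  have hG : Complex.Gamma (a+b) ≠ 0 := by
    rw [show ((a:ℂ)+(b:ℂ)) = ((a+b:ℝ):ℂ) by push_cast; ring] at *
    rw [Complex.Gamma_ofReal]
    exact_mod_cast (Real.Gamma_pos_of_pos hab).ne'
  have key := Complex.Gamma_mul_Gamma_eq_betaIntegral
    (s := a) (t := b) (by simpa using ha) (by simpa using hb)
  have hbeta : Complex.betaIntegral a b
      = ((∫ u in (0:ℝ)..1, u^(a-1) * (1-u)^(b-1) : ℝ) : ℂ) := by
    rw [Complex.betaIntegral, ← intervalIntegral.integral_ofReal]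
    refine intervalIntegral.integral_congr (fun x hx => ?_)
    rw [Set.uIcc_of_le (by norm_num : (0:ℝ) ≤ 1)] at hx
    rw [show ((a:ℂ)-1) = ((a-1:ℝ):ℂ) by push_cast; ring,
      show ((b:ℂ)-1) = ((b-1:ℝ):ℂ) by push_cast; ring,
      show ((1:ℂ) - (x:ℂ)) = ((1-x:ℝ):ℂ) by push_cast; ring,
      ← Complex.ofReal_cpow hx.1, ← Complex.ofReal_cpow (by linarith [hx.2] : (0:ℝ) ≤ 1 - x)]
    push_cast; ring
  rw [hbeta] at key
  have : Complex.Gamma a * Complex.Gamma b / Complex.Gamma (a+b)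
      = ((∫ u in (0:ℝ)..1, u^(a-1) * (1-u)^(b-1) : ℝ) : ℂ) := by
    rw [key]; field_simp
  rw [show ((a:ℂ)+(b:ℂ)) = ((a+b:ℝ):ℂ) by push_cast; ring, Complex.Gamma_ofReal,
    Complex.Gamma_ofReal, Complex.Gamma_ofReal] at this
  exact_mod_cast this.symm

lemma myBetaIntegrable (a b : ℝ) (ha : 0 < a) (hb : 0 < b) :
    IntegrableOn (fun u : ℝ => u^(a-1) * (1-u)^(b-1)) (Icc 0 1) volume := by
  rw [integrableOn_Icc_iff_integrableOn_Ioc]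
  have h := (Complex.betaIntegral_convergent (u := a) (v := b)
    (by simpa using ha) (by simpa using hb)).1
  have h2 : IntegrableOn
      (fun x : ℝ => ((x:ℂ)^((a:ℂ)-1) * (1-(x:ℂ))^((b:ℂ)-1)).re) (Ioc 0 1) volume := h.re
  refine h2.congr_fun (fun x hx => ?_) measurableSet_Ioc
  have h0 : (0:ℝ) ≤ x := le_of_lt hx.1
  have h1 : (0:ℝ) ≤ 1 - x := by linarith [hx.2]
  show _ = _
  beta_reduce
  rw [show ((a:ℂ)-1) = ((a-1:ℝ):ℂ) by push_cast; ring,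
    show ((b:ℂ)-1) = ((b-1:ℝ):ℂ) by push_cast; ring,
    show ((1:ℂ) - (x:ℂ)) = ((1-x:ℝ):ℂ) by push_cast; ring,
    ← Complex.ofReal_cpow h0, ← Complex.ofReal_cpow h1, ← Complex.ofReal_mul,
    Complex.ofReal_re]

lemma myMoment (p : ℝ) (hp : 0 ≤ p) (k : ℕ) :
    ∫ t in (0:ℝ)..1, (t^(2*k) : ℝ) * (1-t^2)^p
      = (1/2) * ∫ u in (0:ℝ)..1, u^((k+1/2:ℝ)-1) * (1-u)^((p+1)-1) := by
  set g : ℝ → ℝ := fun u => u^((k+1/2:ℝ)-1) * (1-u)^((p+1)-1) with hg_def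
  have hpt : ∀ x : ℝ, 0 < x →
      (2*x) * g (x^2) = 2 * (x^(2*k) * (1-x^2)^p) := by
    intro x hx0
    simp only [hg_def]
    have h1 : ((x^2 : ℝ))^((k+1/2:ℝ)-1) = x ^ (2*(k:ℝ)-1) := by
      rw [← Real.rpow_natCast x 2, ← Real.rpow_mul hx0.le]
      norm_num; ring_nf
    have h2 : x ^ (2*(k:ℝ)-1) * x = x^(2*k) := by
      rw [← Real.rpow_add_one hx0.ne', ← Real.rpow_natCast x (2*k)]
      congr 1; push_cast; ring
    rw [h1, show ((p+1)-1) = p by ring]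
    calc (2*x) * (x ^ (2*(k:ℝ)-1) * (1-x^2)^p)
        = 2 * ((x ^ (2*(k:ℝ)-1) * x) * (1-x^2)^p) := by ring
      _ = 2 * (x^(2*k) * (1-x^2)^p) := by rw [h2]
  have hgint : IntegrableOn g (Icc 0 1) volume :=
    myBetaIntegrable (k+1/2) (p+1) (by positivity) (by linarith)
  have himg : (fun t : ℝ => t^2) '' (Set.uIcc (0:ℝ) 1) ⊆ Icc 0 1 := by
    rw [Set.uIcc_of_le (by norm_num : (0:ℝ) ≤ 1)]
    rintro u ⟨t, ⟨ht0, ht1⟩, rfl⟩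
    refine ⟨by positivity, ?_⟩
    show t^2 ≤ 1
    nlinarith
  have himg2 : (fun t : ℝ => t^2) '' Ioo (min (0:ℝ) 1) (max (0:ℝ) 1) ⊆ Ioo 0 1 := by
    rw [min_eq_left (by norm_num : (0:ℝ) ≤ 1), max_eq_right (by norm_num : (0:ℝ) ≤ 1)]
    rintro u ⟨t, ⟨ht0, ht1⟩, rfl⟩
    refine ⟨by positivity, ?_⟩
    show t^2 < 1
    nlinarith
  have key := intervalIntegral.integral_comp_smul_deriv''' (a := (0:ℝ)) (b := 1)
    (f := fun t => t^2) (f' := fun t => 2*t) (g := g)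
    (by fun_prop)
    (fun x hx => by simpa using (hasDerivAt_pow 2 x).hasDerivWithinAt)
    (ContinuousOn.mono (fun u hu => ?_) himg2)
    (hgint.mono_set himg)
    ?_
  · norm_num at key
    have heq : ∫ x in (0:ℝ)..1, 2 * x * g (x^2)
        = ∫ x in (0:ℝ)..1, 2 * (x^(2*k) * (1-x^2)^p) := by
      refine intervalIntegral.integral_congr_ae (MeasureTheory.ae_of_all _ (fun x hx => ?_))
      rw [Set.uIoc_of_le (by norm_num : (0:ℝ) ≤ 1)] at hx
      exact hpt x hx.1
    rw [heq, intervalIntegral.integral_const_mul] at key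
    rw [← key]; ring
  · -- continuity of g on Ioo 0 1
    have hu' : u ∈ Ioo (0:ℝ) 1 := hu
    refine ContinuousAt.continuousWithinAt (ContinuousAt.mul ?_ ?_)
    · exact Real.continuousAt_rpow_const u _ (Or.inl hu'.1.ne')
    · exact ContinuousAt.rpow_const (by fun_prop) (Or.inr (by linarith))
  · -- integrability of x ↦ (2x) • g (x²) on [[0,1]]
    have hcont : Continuous (fun x : ℝ => 2 * (x^(2*k) * (1-x^2)^p)) := by
      apply Continuous.mul continuous_const
      apply Continuous.mul (continuous_pow _)
      exact Continuous.rpow_const (by fun_prop) (fun x => Or.inr hp)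
    rw [Set.uIcc_of_le (by norm_num : (0:ℝ) ≤ 1)]
    refine (hcont.integrableOn_Icc (a := 0) (b := 1)).congr ?_
    have hnull : (volume.restrict (Icc (0:ℝ) 1)) (Iic 0) = 0 := by
      rw [Measure.restrict_apply measurableSet_Iic]
      have : Iic (0:ℝ) ∩ Icc 0 1 = {0} := by
        ext y
        constructor
        · rintro ⟨h1, h2, _⟩
          exact le_antisymm h1 h2
        · rintro rfl
          exact ⟨by simp, by simp, by norm_num⟩
      rw [this]
      exact Real.volume_singleton
    refine (MeasureTheory.measure_mono_null ?_ hnull)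
    intro x hx
    simp only [Set.mem_setOf_eq, Set.mem_Iic] at hx ⊢
    by_contra hx0
    push_neg at hx0
    exact hx (hpt x hx0).symm

lemma myCont (p : ℝ) (hp : 0 ≤ p) (n : ℕ) :
    Continuous (fun t : ℝ => t^n * (1-t^2)^p) := by
  apply Continuous.mul (continuous_pow _)
  exact Continuous.rpow_const (by fun_prop) (fun x => Or.inr hp)

lemma myOdd (p : ℝ) (k : ℕ) :
    ∫ t in (-1:ℝ)..1, t^(2*k+1) * (1-t^2)^p = 0 := by
  have h := intervalIntegral.integral_comp_neg (a := (-1:ℝ)) (b := 1)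
    (f := fun t => t^(2*k+1) * (1-t^2)^p)
  norm_num at h
  have h2 : ∫ x in (-1:ℝ)..1, (-x)^(2*k+1) * (1-x^2)^p
      = ∫ x in (-1:ℝ)..1, -(x^(2*k+1) * (1-x^2)^p) := by
    refine intervalIntegral.integral_congr (fun x hx => ?_)
    rw [Odd.neg_pow ⟨k, by ring⟩]
    ring
  rw [h2, intervalIntegral.integral_neg] at h
  linarith

lemma myEvenSplit (p : ℝ) (hp : 0 ≤ p) (k : ℕ) :
    ∫ t in (-1:ℝ)..1, t^(2*k) * (1-t^2)^p
      = 2 * ∫ t in (0:ℝ)..1, t^(2*k) * (1-t^2)^p := by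
  have hi1 := (myCont p hp (2*k)).intervalIntegrable (μ := volume) (-1) 0
  have hi2 := (myCont p hp (2*k)).intervalIntegrable (μ := volume) 0 1
  have hadd := intervalIntegral.integral_add_adjacent_intervals hi1 hi2
  have h := intervalIntegral.integral_comp_neg (a := (0:ℝ)) (b := 1)
    (f := fun t => t^(2*k) * (1-t^2)^p)
  norm_num at h
  linarith [hadd, h]

lemma myExpSum (y : ℝ) : Real.exp y = ∑' n : ℕ, y^n / n.factorial := by
  rw [Real.exp_eq_exp_ℝ, NormedSpace.exp_eq_tsum_div]

lemma mySwap (p x : ℝ) (hp : 0 ≤ p) :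
    ∫ t in (-1:ℝ)..1, Real.exp (x*t) * (1-t^2)^p
      = ∑' n : ℕ, (x^n / n.factorial) * ∫ t in (-1:ℝ)..1, (t^n : ℝ) * (1-t^2)^p := by
  have hle : (-1:ℝ) ≤ 1 := by norm_num
  rw [intervalIntegral.integral_of_le hle]
  have hinner : ∀ n : ℕ, ∫ t in (-1:ℝ)..1, (t^n : ℝ) * (1-t^2)^p
      = ∫ t in Ioc (-1:ℝ) 1, t^n * (1-t^2)^p ∂volume :=
    fun n => intervalIntegral.integral_of_le hle
  simp_rw [hinner]
  set μ := volume.restrict (Ioc (-1:ℝ) 1) with hμ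
  set F : ℕ → ℝ → ℝ := fun n t => (x^n / n.factorial) * (t^n * (1-t^2)^p) with hF
  have h_int : ∀ n, Integrable (F n) μ := by
    intro n
    exact (continuous_const.mul (myCont p hp n)).integrableOn_Ioc
  have hC_int : Integrable (fun t : ℝ => (1-t^2)^p) μ := by
    have hc : Continuous (fun t : ℝ => (1-t^2)^p) :=
      Continuous.rpow_const (by fun_prop) (fun x => Or.inr hp)
    exact hc.integrableOn_Ioc
  set C : ℝ := ∫ t, (1-t^2)^p ∂μ with hC
  have h_norm : ∀ n : ℕ, (∫ t, ‖F n t‖ ∂μ) ≤ (|x|^n / n.factorial) * C := by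
    intro n
    rw [hC, ← MeasureTheory.integral_const_mul]
    refine MeasureTheory.integral_mono_ae (h_int n).norm (hC_int.const_mul _) ?_
    show ∀ᵐ t ∂(volume.restrict (Ioc (-1:ℝ) 1)), ‖F n t‖ ≤ |x|^n / n.factorial * (1-t^2)^p
    rw [MeasureTheory.ae_restrict_iff' measurableSet_Ioc]
    refine MeasureTheory.ae_of_all _ (fun t ht => ?_)
    have h1 : (0:ℝ) ≤ 1 - t^2 := by nlinarith [ht.1, ht.2]
    have h2 : |t| ≤ 1 := abs_le.mpr ⟨ht.1.le, ht.2⟩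
    have h3 : (0:ℝ) ≤ (1-t^2)^p := Real.rpow_nonneg h1 p
    rw [hF]
    show |(x^n / n.factorial) * (t^n * (1-t^2)^p)| ≤ _
    rw [abs_mul, abs_mul, abs_of_nonneg h3, abs_div, abs_pow, abs_pow, Nat.abs_cast]
    have h4 : |t|^n ≤ 1 := pow_le_one₀ (abs_nonneg t) h2
    have h5 : (0:ℝ) ≤ |x|^n / n.factorial := by positivity
    calc |x|^n / n.factorial * (|t|^n * (1-t^2)^p)
        ≤ |x|^n / n.factorial * (1 * (1-t^2)^p) := by
          apply mul_le_mul_of_nonneg_left _ h5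
          exact mul_le_mul_of_nonneg_right h4 h3
      _ = |x|^n / n.factorial * (1-t^2)^p := by ring
  have hsum : Summable (fun n : ℕ => ∫ t, ‖F n t‖ ∂μ) := by
    refine Summable.of_nonneg_of_le
      (fun n => MeasureTheory.integral_nonneg (fun t => norm_nonneg _)) h_norm ?_
    exact (Real.summable_pow_div_factorial |x|).mul_right C
  have key := MeasureTheory.integral_tsum_of_summable_integral_norm h_int hsum
  have hptw : ∀ t : ℝ, (∑' n, F n t) = Real.exp (x*t) * (1-t^2)^p := by
    intro t
    rw [hF]
    have : ∀ n : ℕ, (x^n / n.factorial) * (t^n * (1-t^2)^p)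
        = ((x*t)^n / n.factorial) * (1-t^2)^p := by
      intro n; rw [mul_pow]; ring
    simp_rw [this]
    rw [tsum_mul_right, ← myExpSum (x*t)]
  have hFi : ∀ n : ℕ, ∫ t, F n t ∂μ
      = (x^n / n.factorial) * ∫ t in Ioc (-1:ℝ) 1, t^n * (1-t^2)^p ∂volume := by
    intro n
    rw [hF, hμ]
    exact MeasureTheory.integral_const_mul _ _
  calc ∫ t in Ioc (-1:ℝ) 1, Real.exp (x*t) * (1-t^2)^p ∂volume
      = ∫ t, (∑' n, F n t) ∂μ := by rw [hμ]; exact (integral_congr_ae (ae_of_all _ (fun t => (hptw t).symm)))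
    _ = ∑' n, ∫ t, F n t ∂μ := key.symm
    _ = ∑' n : ℕ, (x^n / n.factorial) * ∫ t in Ioc (-1:ℝ) 1, t^n * (1-t^2)^p ∂volume := by
        exact tsum_congr hFi

lemma myGammaGe (ν : ℝ) (hν : 1/2 ≤ ν) (k : ℕ) :
    Real.Gamma (ν+1) ≤ Real.Gamma (ν+k+1) := by
  induction k with
  | zero => simp
  | succ n ih =>
    have h : ν + (n+1 : ℕ) + 1 = (ν + n + 1) + 1 := by push_cast; ring
    have hpos : 0 < Real.Gamma (ν + n + 1) := Real.Gamma_pos_of_pos (by positivity)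
    have hone : (1:ℝ) ≤ ν + n + 1 := by
      have : (0:ℝ) ≤ n := Nat.cast_nonneg n
      linarith
    calc Real.Gamma (ν+1) ≤ Real.Gamma (ν + n + 1) := ih
      _ ≤ (ν + n + 1) * Real.Gamma (ν + n + 1) := le_mul_of_one_le_left hpos.le hone
      _ = Real.Gamma ((ν + n + 1) + 1) := (Real.Gamma_add_one (by positivity)).symm
      _ = Real.Gamma (ν + (n+1:ℕ) + 1) := by rw [h]

lemma mySummable (ν x : ℝ) (hν : 1/2 ≤ ν) :
    Summable (fun k : ℕ => x^(2*k) / (4^k * (Nat.factorial k : ℝ) * Real.Gamma (ν+k+1))) := by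
  have hΓ1 : 0 < Real.Gamma (ν+1) := Real.Gamma_pos_of_pos (by linarith)
  refine Summable.of_nonneg_of_le (fun k => ?_) (fun k => ?_)
    (((Real.summable_pow_div_factorial (x^2/4)).mul_right (1 / Real.Gamma (ν+1))))
  · have hΓk : 0 < Real.Gamma (ν+(k:ℝ)+1) := Real.Gamma_pos_of_pos (by positivity)
    have hnum : 0 ≤ x^(2*k) := by rw [pow_mul]; positivity
    exact div_nonneg hnum (by positivity)
  · have hΓk : 0 < Real.Gamma (ν+(k:ℝ)+1) := Real.Gamma_pos_of_pos (by positivity)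
    have h1 : x^(2*k) / (4^k * (Nat.factorial k : ℝ) * Real.Gamma (ν+k+1))
        = (x^2/4)^k / (Nat.factorial k) * (1/Real.Gamma (ν+k+1)) := by
      rw [pow_mul, div_pow]
      ring
    rw [h1]
    apply mul_le_mul_of_nonneg_left
    · apply div_le_div_of_nonneg_left (by norm_num) hΓ1 (myGammaGe ν hν k)
    · positivity

lemma myIdentity (ν x : ℝ) (hν : 1/2 ≤ ν) (hx : 0 < x) :
    besselIseries ν x = (x/2)^ν / (Real.sqrt π * Real.Gamma (ν+1/2)) *
      ∫ t in (-1:ℝ)..1, Real.exp (x*t) * (1-t^2)^(ν-1/2) := by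
  set p : ℝ := ν - 1/2 with hp_def
  have hp : 0 ≤ p := by simp [hp_def]; linarith
  have hx2 : 0 < x/2 := by linarith
  have hΓh : 0 < Real.Gamma (ν+1/2) := Real.Gamma_pos_of_pos (by linarith)
  have hπ : 0 < Real.sqrt π := Real.sqrt_pos.mpr Real.pi_pos
  set T : ℕ → ℝ := fun k => x^(2*k) / (4^k * (Nat.factorial k : ℝ) * Real.Gamma (ν+k+1))
    with hT_def
  -- Step 1 : series side
  have step1 : besselIseries ν x = (x/2)^ν * ∑' k, T k := by
    rw [besselIseries, ← tsum_mul_left]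
    refine tsum_congr (fun k => ?_)
    have hΓk : 0 < Real.Gamma (ν+(k:ℝ)+1) := Real.Gamma_pos_of_pos (by positivity)
    have e1 : (x/2) ^ (2*(k:ℝ) + ν) = (x/2)^(2*k : ℕ) * (x/2)^ν := by
      rw [show (2*(k:ℝ) + ν) = ((2*k : ℕ) : ℝ) + ν by push_cast; ring,
        Real.rpow_add hx2, Real.rpow_natCast]
    rw [e1, hT_def]
    have e2 : (x/2 : ℝ)^(2*k : ℕ) = x^(2*k) / 4^k := by
      rw [div_pow, pow_mul x 2, pow_mul 2 2]
      norm_num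
    rw [e2]
    have h4 : (0:ℝ) < 4^k := by positivity
    have hf : (0:ℝ) < (Nat.factorial k : ℝ) := by positivity
    field_simp
  -- Step 2 : integral side
  have hTsum := mySummable ν x hν
  rw [← hT_def] at hTsum
  have step2 : (∫ t in (-1:ℝ)..1, Real.exp (x*t) * (1-t^2)^p)
      = Real.sqrt π * Real.Gamma (ν+1/2) * ∑' k, T k := by
    rw [mySwap p x hp]
    set f : ℕ → ℝ := fun n => (x^n / n.factorial) * ∫ t in (-1:ℝ)..1, (t^n : ℝ) * (1-t^2)^p
      with hf_def
    have hEval : ∀ k : ℕ, f (2*k) = Real.sqrt π * Real.Gamma (ν+1/2) * T k := by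
      intro k
      have hΓk : 0 < Real.Gamma (ν+(k:ℝ)+1) := Real.Gamma_pos_of_pos (by positivity)
      have hI : (∫ t in (-1:ℝ)..1, (t^(2*k) : ℝ) * (1-t^2)^p)
          = Real.Gamma (k+1/2) * Real.Gamma (p+1) / Real.Gamma (ν+k+1) := by
        rw [myEvenSplit p hp k, myMoment p hp k,
          myBeta (k+1/2) (p+1) (by positivity) (by linarith)]
        rw [show ((k:ℝ)+1/2) + (p+1) = ν + k + 1 by rw [hp_def]; ring]
        ring
      rw [hf_def]
      show (x^(2*k) / (Nat.factorial (2*k))) * _ = _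
      rw [hI, myGamma_nat_add_half k, show p + 1 = ν + 1/2 by rw [hp_def]; ring, hT_def]
      have h1 : (0:ℝ) < (Nat.factorial (2*k) : ℝ) := by positivity
      have h2 : (0:ℝ) < (Nat.factorial k : ℝ) := by positivity
      have h3 : (0:ℝ) < (4:ℝ)^k := by positivity
      field_simp
    have hOdd : ∀ k : ℕ, f (2*k+1) = 0 := by
      intro k
      rw [hf_def]
      show (x^(2*k+1) / (Nat.factorial (2*k+1))) * _ = 0
      rw [myOdd p k, mul_zero]
    have hE : Summable (fun k => f (2*k)) := by
      simp_rw [hEval]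
      exact hTsum.mul_left _
    have hO : Summable (fun k => f (2*k+1)) := by
      simp_rw [hOdd]
      exact summable_zero
    rw [← tsum_even_add_odd hE hO]
    simp_rw [hEval, hOdd]
    rw [tsum_zero, add_zero, tsum_mul_left]
  rw [step1, step2]
  field_simp

noncomputable def Gfun (p : ℝ) (x : ℝ) : ℝ :=
  ∫ u in (0:ℝ)..(2*x), Real.exp (-u) * u^p * (2 - u/x)^p

lemma myIntegrandCont (p : ℝ) (hp : 0 ≤ p) (x : ℝ) :
    Continuous (fun u : ℝ => Real.exp (-u) * u^p * (2 - u/x)^p) := by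
  refine Continuous.mul (Continuous.mul (by fun_prop) ?_) ?_
  · exact Continuous.rpow_const continuous_id (fun u => Or.inr hp)
  · exact Continuous.rpow_const (by fun_prop) (fun u => Or.inr hp)

lemma myGmono (p : ℝ) (hp : 0 ≤ p) : StrictMonoOn (Gfun p) (Ioi 0) := by
  intro x hx y hy hxy
  simp only [mem_Ioi] at hx hy
  have h2x : (0:ℝ) ≤ 2*x := by linarith
  have hIx := (myIntegrandCont p hp x)
  have hIy := (myIntegrandCont p hp y)
  have step1 : Gfun p x ≤ ∫ u in (0:ℝ)..(2*x), Real.exp (-u) * u^p * (2 - u/y)^p := by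
    refine intervalIntegral.integral_mono_on h2x
      ((hIx).intervalIntegrable _ _) ((hIy).intervalIntegrable _ _) (fun u hu => ?_)
    have hu0 : 0 ≤ u := hu.1
    have h1 : 0 ≤ 2 - u/x := by
      rw [sub_nonneg, div_le_iff₀ hx]; linarith [hu.2]
    have h2 : 2 - u/x ≤ 2 - u/y := by
      have := div_le_div_of_nonneg_left hu0 hx hxy.le
      linarith
    have h3 : 0 ≤ Real.exp (-u) * u^p := by positivity
    exact mul_le_mul_of_nonneg_left (Real.rpow_le_rpow h1 h2 hp) h3
  have step2 : (∫ u in (0:ℝ)..(2*x), Real.exp (-u) * u^p * (2 - u/y)^p)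
      < Gfun p y := by
    have hadd := intervalIntegral.integral_add_adjacent_intervals
      ((hIy).intervalIntegrable (μ := volume) 0 (2*x)) ((hIy).intervalIntegrable (μ := volume) (2*x) (2*y))
    have hpos : 0 < ∫ u in (2*x)..(2*y), Real.exp (-u) * u^p * (2 - u/y)^p := by
      refine intervalIntegral.intervalIntegral_pos_of_pos_on
        ((hIy).intervalIntegrable _ _) (fun u hu => ?_) (by linarith)
      have hu0 : 0 < u := lt_trans (by linarith) hu.1
      have h1 : 0 < 2 - u/y := by
        rw [sub_pos, div_lt_iff₀ hy]; linarith [hu.2]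
      have := Real.rpow_nonneg hu0.le p
      positivity
    rw [Gfun, ← hadd]
    linarith
  exact lt_of_le_of_lt step1 step2

lemma myGtendsto (p : ℝ) (hp : 0 ≤ p) :
    Tendsto (Gfun p) atTop (nhds ((2:ℝ)^p * Real.Gamma (p+1))) := by
  have hp1 : (0:ℝ) < p + 1 := by linarith
  have hGint : IntegrableOn (fun u : ℝ => Real.exp (-u) * u^p) (Ioi 0) volume := by
    have := Real.GammaIntegral_convergent hp1
    simpa using this
  have hGval : Real.Gamma (p+1) = ∫ u in Ioi (0:ℝ), Real.exp (-u) * u^p := by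
    rw [Real.Gamma_eq_integral hp1]
    norm_num
  have hcontA : Continuous (fun u : ℝ => Real.exp (-u) * u^p) := by
    refine Continuous.mul (by fun_prop) ?_
    exact Continuous.rpow_const continuous_id (fun u => Or.inr hp)
  set A : ℝ → ℝ := fun T => ∫ u in (0:ℝ)..T, Real.exp (-u) * u^p with hA_def
  have hAnonneg : ∀ T, 0 ≤ T → 0 ≤ A T := fun T hT =>
    intervalIntegral.integral_nonneg hT
      (fun u hu => mul_nonneg (Real.exp_pos _).le (Real.rpow_nonneg hu.1 p))
  have hAle : ∀ T : ℝ, 0 ≤ T → A T ≤ Real.Gamma (p+1) := by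
    intro T h
    show (∫ u in (0:ℝ)..T, Real.exp (-u) * u^p) ≤ _
    rw [hGval, intervalIntegral.integral_of_le h]
    refine MeasureTheory.setIntegral_mono_set hGint ?_ ?_
    · refine MeasureTheory.ae_restrict_of_forall_mem measurableSet_Ioi (fun u hu => ?_)
      have hu0 : (0:ℝ) < u := hu
      exact mul_nonneg (Real.exp_pos _).le (Real.rpow_nonneg hu0.le p)
    · exact HasSubset.Subset.eventuallyLE Ioc_subset_Ioi_self
  have hAtend : Tendsto A atTop (nhds (Real.Gamma (p+1))) := by
    rw [hGval]
    exact intervalIntegral_tendsto_integral_Ioi 0 hGint tendsto_id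
  -- upper bound for G
  have hGle : ∀ x : ℝ, 0 < x → Gfun p x ≤ 2^p * Real.Gamma (p+1) := by
    intro x hx
    have h1 : Gfun p x ≤ ∫ u in (0:ℝ)..(2*x), 2^p * (Real.exp (-u) * u^p) := by
      refine intervalIntegral.integral_mono_on (by linarith)
        ((myIntegrandCont p hp x).intervalIntegrable _ _)
        ((continuous_const.mul hcontA).intervalIntegrable _ _) (fun u hu => ?_)
      have hu0 : 0 ≤ u := hu.1
      have h1 : 0 ≤ 2 - u/x := by
        rw [sub_nonneg, div_le_iff₀ hx]; linarith [hu.2]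
      have h2 : 2 - u/x ≤ 2 := by
        have : 0 ≤ u/x := by positivity
        linarith
      have h3 : 0 ≤ Real.exp (-u) * u^p := by positivity
      calc Real.exp (-u) * u^p * (2-u/x)^p ≤ Real.exp (-u) * u^p * 2^p :=
            mul_le_mul_of_nonneg_left (Real.rpow_le_rpow h1 h2 hp) h3
        _ = 2^p * (Real.exp (-u) * u^p) := by ring
    rw [intervalIntegral.integral_const_mul] at h1
    have h2 : A (2*x) ≤ Real.Gamma (p+1) := hAle (2*x) (by linarith)
    have h2p : (0:ℝ) ≤ (2:ℝ)^p := Real.rpow_nonneg (by norm_num) p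
    calc Gfun p x ≤ 2^p * A (2*x) := h1
      _ ≤ 2^p * Real.Gamma (p+1) := mul_le_mul_of_nonneg_left h2 h2p
  -- lower bound: for T ≤ x, Gfun p x ≥ (2 - 2T/x)^p * A T
  have hGge : ∀ T x : ℝ, 0 < T → T ≤ x → (2 - 2*T/x)^p * A (2*T) ≤ Gfun p x := by
    intro T x hT hTx
    have hx : 0 < x := lt_of_lt_of_le hT hTx
    have step1 : (2 - 2*T/x)^p * A (2*T)
        ≤ ∫ u in (0:ℝ)..(2*T), Real.exp (-u) * u^p * (2 - u/x)^p := by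
      rw [hA_def, ← intervalIntegral.integral_const_mul]
      refine intervalIntegral.integral_mono_on (by linarith)
        ((continuous_const.mul hcontA).intervalIntegrable _ _)
        ((myIntegrandCont p hp x).intervalIntegrable _ _) (fun u hu => ?_)
      have hu0 : 0 ≤ u := hu.1
      have hb0 : 0 ≤ 2 - 2*T/x := by
        rw [sub_nonneg, div_le_iff₀ hx]; linarith
      have hb1 : 2 - 2*T/x ≤ 2 - u/x := by
        have : u/x ≤ 2*T/x := by
          gcongr
          exact hu.2
        linarith
      have h3 : 0 ≤ Real.exp (-u) * u^p := by positivity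
      calc (2 - 2*T/x)^p * (Real.exp (-u) * u^p)
          = Real.exp (-u) * u^p * (2 - 2*T/x)^p := by ring
        _ ≤ Real.exp (-u) * u^p * (2 - u/x)^p :=
            mul_le_mul_of_nonneg_left (Real.rpow_le_rpow hb0 hb1 hp) h3
    have step2 : (∫ u in (0:ℝ)..(2*T), Real.exp (-u) * u^p * (2 - u/x)^p) ≤ Gfun p x := by
      have hadd := intervalIntegral.integral_add_adjacent_intervals
        ((myIntegrandCont p hp x).intervalIntegrable (μ := volume) 0 (2*T))
        ((myIntegrandCont p hp x).intervalIntegrable (μ := volume) (2*T) (2*x))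
      have hpos : 0 ≤ ∫ u in (2*T)..(2*x), Real.exp (-u) * u^p * (2 - u/x)^p := by
        refine intervalIntegral.integral_nonneg (by linarith) (fun u hu => ?_)
        have hu0 : 0 ≤ u := le_trans (by linarith) hu.1
        have h1 : 0 ≤ 2 - u/x := by
          rw [sub_nonneg, div_le_iff₀ hx]; linarith [hu.2]
        have := Real.rpow_nonneg h1 p
        positivity
      rw [Gfun, ← hadd]
      linarith
    linarith
  -- now the ε argument
  rw [Metric.tendsto_atTop]
  intro ε hε
  set M := (2:ℝ)^p * Real.Gamma (p+1) with hM
  have h2p : (0:ℝ) < (2:ℝ)^p := Real.rpow_pos_of_pos (by norm_num) p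
  -- choose T with 2^p * A (2T) > M - ε/2
  have hA2 : Tendsto (fun T => (2:ℝ)^p * A (2*T)) atTop (nhds M) := by
    rw [hM]
    exact ((hAtend.comp (tendsto_id.const_mul_atTop (by norm_num : (0:ℝ) < 2))).const_mul _)
  have hev : ∀ᶠ T in atTop, (2:ℝ)^p * A (2*T) > M - ε/2 := by
    refine hA2.eventually (eventually_gt_nhds ?_)
    linarith
  obtain ⟨T, hT1, hT0⟩ := (hev.and (eventually_gt_atTop (0:ℝ))).exists
  -- (2 - 2T/x)^p * A(2T) → 2^p * A(2T) as x → ∞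
  have hbase : Tendsto (fun x : ℝ => 2 - 2*T/x) atTop (nhds 2) := by
    have : Tendsto (fun x : ℝ => 2*T/x) atTop (nhds 0) := by
      exact Tendsto.div_atTop tendsto_const_nhds tendsto_id
    have h : Tendsto (fun x : ℝ => 2 - 2*T/x) atTop (nhds (2 - 0)) :=
      Tendsto.sub tendsto_const_nhds this
    simpa using h
  have hrp : Tendsto (fun x : ℝ => (2 - 2*T/x)^p * A (2*T)) atTop (nhds ((2:ℝ)^p * A (2*T))) := by
    refine Tendsto.mul_const _ ?_
    exact (hbase.rpow_const (Or.inr hp))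
  have hev2 : ∀ᶠ x in atTop, (2 - 2*T/x)^p * A (2*T) > M - ε := by
    refine hrp.eventually (eventually_gt_nhds ?_)
    linarith
  rw [eventually_atTop] at hev2
  obtain ⟨N, hN⟩ := hev2
  refine ⟨max N (max T 1), fun x hx => ?_⟩
  have hx1 : N ≤ x := le_trans (le_max_left _ _) hx
  have hx2 : T ≤ x := le_trans (le_trans (le_max_left _ _) (le_max_right _ _)) hx
  have hx3 : (0:ℝ) < x := lt_of_lt_of_le (by norm_num) (le_trans (le_trans (le_max_right _ _) (le_max_right _ _)) hx)
  have hlow : M - ε < Gfun p x := lt_of_lt_of_le (hN x hx1) (hGge T x hT0 hx2)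
  have hup : Gfun p x ≤ M := hGle x hx3
  rw [Real.dist_eq, abs_sub_lt_iff]
  constructor <;> linarith

lemma myGformula (ν x : ℝ) (hν : 1/2 ≤ ν) (hx : 0 < x) :
    Real.sqrt x * Real.exp (-x) * besselIseries ν x
      = (1 / ((2:ℝ)^ν * Real.sqrt π * Real.Gamma (ν+1/2))) * Gfun (ν-1/2) x := by
  set p : ℝ := ν - 1/2 with hp_def
  have hp : 0 ≤ p := by rw [hp_def]; linarith
  have hΓh : 0 < Real.Gamma (ν+1/2) := Real.Gamma_pos_of_pos (by linarith)
  have hπ : 0 < Real.sqrt π := Real.sqrt_pos.mpr Real.pi_pos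
  have h2ν : 0 < (2:ℝ)^ν := Real.rpow_pos_of_pos (by norm_num) ν
  have hxp : 0 < x^p := Real.rpow_pos_of_pos hx p
  set f : ℝ → ℝ := fun s => Real.exp (-(x*s)) * (1-(1-s)^2)^p with hf_def
  have claimA : Real.exp (-x) * (∫ t in (-1:ℝ)..1, Real.exp (x*t) * (1-t^2)^p)
      = ∫ t in (-1:ℝ)..1, f (1-t) := by
    rw [← intervalIntegral.integral_const_mul]
    refine intervalIntegral.integral_congr (fun t ht => ?_)
    show Real.exp (-x) * (Real.exp (x*t) * (1-t^2)^p)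
      = Real.exp (-(x*(1-t))) * (1-(1-(1-t))^2)^p
    rw [show (1-(1-t)) = t by ring, ← mul_assoc, ← Real.exp_add]
    ring_nf
  have claimB : (∫ t in (-1:ℝ)..1, f (1-t)) = ∫ s in (0:ℝ)..2, f s := by
    have h := intervalIntegral.integral_comp_sub_left (a := (-1:ℝ)) (b := 1) f 1
    norm_num at h
    convert h using 2 <;> norm_num
  have claimC : (∫ s in (0:ℝ)..2, f s) = (1/x) * ∫ u in (0:ℝ)..(2*x), f (u/x) := by
    have h := intervalIntegral.integral_comp_div (a := (0:ℝ)) (b := 2*x) (c := x) (f := f) hx.ne'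
    rw [zero_div, mul_div_assoc, div_self hx.ne', mul_one] at h
    rw [h, smul_eq_mul]
    field_simp
  have claimD : (x^(p+1)/x) * (∫ u in (0:ℝ)..(2*x), f (u/x)) = Gfun p x := by
    rw [← intervalIntegral.integral_const_mul, Gfun]
    refine intervalIntegral.integral_congr_ae (MeasureTheory.ae_of_all _ (fun u hu => ?_))
    rw [Set.uIoc_of_le (by linarith : (0:ℝ) ≤ 2*x)] at hu
    have hu0 : 0 < u := hu.1
    have hux : u ≤ 2*x := hu.2
    have h1 : x*(u/x) = u := by field_simp
    have h2 : (1-(1-u/x)^2) = (u/x)*(2-u/x) := by ring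
    have h3 : (0:ℝ) ≤ u/x := by positivity
    have h4 : (0:ℝ) ≤ 2 - u/x := by
      rw [sub_nonneg, div_le_iff₀ hx]; linarith
    show (x^(p+1)/x) * (Real.exp (-(x*(u/x))) * (1-(1-u/x)^2)^p) = _
    rw [h1, h2, Real.mul_rpow h3 h4, Real.div_rpow hu0.le hx.le,
      Real.rpow_add_one hx.ne' p]
    field_simp
  have hsq : Real.sqrt x * (x/2)^ν = x^(p+1) / 2^ν := by
    rw [Real.sqrt_eq_rpow, Real.div_rpow hx.le (by norm_num : (0:ℝ) ≤ 2),
      show p + 1 = 1/2 + ν by rw [hp_def]; ring, Real.rpow_add hx]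
    ring
  rw [myIdentity ν x hν hx, ← hp_def]
  calc Real.sqrt x * Real.exp (-x) * ((x/2)^ν / (Real.sqrt π * Real.Gamma (ν+1/2)) *
        ∫ t in (-1:ℝ)..1, Real.exp (x*t) * (1-t^2)^p)
      = (Real.sqrt x * (x/2)^ν) / (Real.sqrt π * Real.Gamma (ν+1/2)) *
        (Real.exp (-x) * ∫ t in (-1:ℝ)..1, Real.exp (x*t) * (1-t^2)^p) := by ring
    _ = (x^(p+1) / 2^ν) / (Real.sqrt π * Real.Gamma (ν+1/2)) *
        ((1/x) * ∫ u in (0:ℝ)..(2*x), f (u/x)) := by rw [hsq, claimA, claimB, claimC]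
    _ = (1 / ((2:ℝ)^ν * Real.sqrt π * Real.Gamma (ν+1/2))) *
        ((x^(p+1)/x) * (∫ u in (0:ℝ)..(2*x), f (u/x))) := by ring
    _ = (1 / ((2:ℝ)^ν * Real.sqrt π * Real.Gamma (ν+1/2))) * Gfun p x := by rw [claimD]

/-- For `ν ≥ 1/2`, the function `x ↦ x^{1/2} e^{-x} I_ν(x)` is strictly increasing on `(0,∞)`
and converges to `1/√(2π)` at `∞`; consequently `I_ν(x) ≤ (1/√(2π)) x^{-1/2} e^x`. -/
theorem sqrt_exp_mul_besselI_strictMono_and_bound (ν : ℝ) (hν : 1/2 ≤ ν) :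
    StrictMonoOn (fun x => Real.sqrt x * Real.exp (-x) * besselIseries ν x) (Set.Ioi 0) ∧
    Filter.Tendsto (fun x => Real.sqrt x * Real.exp (-x) * besselIseries ν x)
      Filter.atTop (nhds (1 / Real.sqrt (2 * Real.pi))) ∧
    ∀ x : ℝ, 0 < x →
      besselIseries ν x ≤ (1 / Real.sqrt (2 * Real.pi)) * x ^ (-(1:ℝ)/2) * Real.exp x := by
  set p : ℝ := ν - 1/2 with hp_def
  have hp : 0 ≤ p := by rw [hp_def]; linarith
  have hΓh : 0 < Real.Gamma (ν+1/2) := Real.Gamma_pos_of_pos (by linarith)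
  have hπ : 0 < Real.sqrt π := Real.sqrt_pos.mpr Real.pi_pos
  have h2ν : 0 < (2:ℝ)^ν := Real.rpow_pos_of_pos (by norm_num) ν
  set c : ℝ := 1 / ((2:ℝ)^ν * Real.sqrt π * Real.Gamma (ν+1/2)) with hc_def
  have hc : 0 < c := by rw [hc_def]; positivity
  set f : ℝ → ℝ := fun x => Real.sqrt x * Real.exp (-x) * besselIseries ν x with hf_def
  have hL : c * ((2:ℝ)^p * Real.Gamma (p+1)) = 1 / Real.sqrt (2*π) := by
    have h2 : (2:ℝ)^ν = 2^p * Real.sqrt 2 := by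
      rw [Real.sqrt_eq_rpow, ← Real.rpow_add (by norm_num : (0:ℝ) < 2), hp_def]
      norm_num
    have hs2 : 0 < Real.sqrt 2 := Real.sqrt_pos.mpr (by norm_num)
    have h2p : 0 < (2:ℝ)^p := Real.rpow_pos_of_pos (by norm_num) p
    rw [hc_def, show p + 1 = ν + 1/2 by rw [hp_def]; ring, h2,
      Real.sqrt_mul (by norm_num : (0:ℝ) ≤ 2) π]
    field_simp
  have hmono : StrictMonoOn f (Set.Ioi 0) := by
    intro a ha b hb hab
    simp only [hf_def]
    rw [myGformula ν a hν ha, myGformula ν b hν hb, ← hp_def, ← hc_def]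
    exact (mul_lt_mul_iff_right₀ hc).mpr (myGmono p hp ha hb hab)
  have htend : Tendsto f atTop (nhds (1 / Real.sqrt (2*π))) := by
    have h1 : Tendsto (fun x => c * Gfun p x) atTop (nhds (c * ((2:ℝ)^p * Real.Gamma (p+1)))) :=
      (myGtendsto p hp).const_mul c
    rw [hL] at h1
    refine h1.congr' ?_
    filter_upwards [eventually_gt_atTop (0:ℝ)] with x hx
    rw [hf_def]
    show c * Gfun p x = Real.sqrt x * Real.exp (-x) * besselIseries ν x
    rw [myGformula ν x hν hx, ← hp_def, ← hc_def]
  refine ⟨hmono, htend, fun x hx => ?_⟩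
  have hfle : f x ≤ 1 / Real.sqrt (2*π) := by
    refine ge_of_tendsto htend ?_
    filter_upwards [eventually_ge_atTop (max x 1)] with y hy
    have hxy : x ≤ y := le_trans (le_max_left _ _) hy
    have hy0 : (0:ℝ) < y := lt_of_lt_of_le one_pos (le_trans (le_max_right _ _) hy)
    rcases eq_or_lt_of_le hxy with rfl | h
    · exact le_refl _
    · exact (hmono (Set.mem_Ioi.mpr hx) (Set.mem_Ioi.mpr hy0) h).le
  have hpos : 0 < x ^ (-(1:ℝ)/2) * Real.exp x := by
    have := Real.rpow_pos_of_pos hx (-(1:ℝ)/2)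
    positivity
  have hkey : f x * (x ^ (-(1:ℝ)/2) * Real.exp x) = besselIseries ν x := by
    rw [hf_def]
    show Real.sqrt x * Real.exp (-x) * besselIseries ν x * (x ^ (-(1:ℝ)/2) * Real.exp x) = _
    have h5 : Real.sqrt x * x^(-(1:ℝ)/2) = 1 := by
      rw [Real.sqrt_eq_rpow, ← Real.rpow_add hx]
      norm_num
    have h6 : Real.exp (-x) * Real.exp x = 1 := by
      rw [← Real.exp_add]; norm_num
    calc Real.sqrt x * Real.exp (-x) * besselIseries ν x * (x ^ (-(1:ℝ)/2) * Real.exp x)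
        = (Real.sqrt x * x^(-(1:ℝ)/2)) * (Real.exp (-x) * Real.exp x) * besselIseries ν x := by
          ring
      _ = besselIseries ν x := by rw [h5, h6]; ring
  calc besselIseries ν x = f x * (x ^ (-(1:ℝ)/2) * Real.exp x) := hkey.symm
    _ ≤ (1 / Real.sqrt (2*π)) * (x ^ (-(1:ℝ)/2) * Real.exp x) :=
        mul_le_mul_of_nonneg_right hfle hpos.le
    _ = (1 / Real.sqrt (2*π)) * x ^ (-(1:ℝ)/2) * Real.exp x := by ring

end BesselAux
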